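/- arXiv:1601.04912 — 2 statements merged into one kernel-verified Lean document; each statement's English description precedes it below -/
import Mathlib

section
/- Let A be a real 6×6 matrix with 3×3-block decomposition A = [[A_yy, A_yz],[A_zy, A_zz]] such that A_zz is invertible, let J = diag(2^{−1/2}, 2^{−1/2}, 1), and define the 3×6 matrix function 𝒳(ζ) = J⁻¹ A_zz⁻¹ A_zy · ( −ζ·I₃ | 2^{1/2}(ζ²/2 − 1/24)·I₃ ) for ζ ∈ ℝ. Then for every ζ the derivative satisfies A_zz · J · 𝒳′(ζ) = −A_zy · ( I₃ | −2^{1/2} ζ · I₃ ); in particular 𝒳 solves the two-point boundary-value problem −A_zz · J · 𝒳″(ζ) = A_zy · ( O₃ | −2^{1/2} I₃ ) for ζ ∈ (−1/2, 1/2), together with the boundary conditions ±A_zz · J · 𝒳′(±1/2) = ∓A_zy · ( I₃ | ∓2^{−1/2} I₃ ). -/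
/- STATEMENT 1: With A a real 6×6 matrix whose lower-right 3×3 block A_zz is invertible,
J = diag(2^{−1/2}, 2^{−1/2}, 1), and
𝒳(ζ) = J⁻¹ A_zz⁻¹ A_zy · ( −ζ·I₃ | 2^{1/2}(ζ²/2 − 1/24)·I₃ ),
one has A_zz · J · 𝒳′(ζ) = −A_zy · ( I₃ | −2^{1/2} ζ · I₃ ) for all ζ; in particular 𝒳 solves
−A_zz · J · 𝒳″(ζ) = A_zy · ( O₃ | −2^{1/2} I₃ ) on (−1/2, 1/2) with the boundary conditions
±A_zz · J · 𝒳′(±1/2) = ∓A_zy · ( I₃ | ∓2^{−1/2} I₃ ). -/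

open Matrix

noncomputable section

def lo3 : Fin 3 → Fin 6 := fun i => ⟨i, by omega⟩
def hi3 : Fin 3 → Fin 6 := fun i => ⟨i + 3, by omega⟩

/-- Lower-left 3×3 block (last three rows, first three columns). -/
def Azy (A : Matrix (Fin 6) (Fin 6) ℝ) : Matrix (Fin 3) (Fin 3) ℝ := A.submatrix hi3 lo3

/-- Lower-right 3×3 block (last three rows and columns). -/
def Azz (A : Matrix (Fin 6) (Fin 6) ℝ) : Matrix (Fin 3) (Fin 3) ℝ := A.submatrix hi3 hi3

/-- The diagonal matrix J = diag(2^{−1/2}, 2^{−1/2}, 1). -/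
def Jmat : Matrix (Fin 3) (Fin 3) ℝ :=
  Matrix.diagonal ![(Real.sqrt 2)⁻¹, (Real.sqrt 2)⁻¹, 1]

/-- Horizontal concatenation ( M | N ) of two 3×3 blocks into a 3×6 matrix. -/
def hcat (M N : Matrix (Fin 3) (Fin 3) ℝ) : Matrix (Fin 3) (Fin 6) ℝ :=
  Matrix.of fun i j =>
    if h : (j : ℕ) < 3 then M i ⟨j, h⟩ else N i ⟨(j : ℕ) - 3, by omega⟩

/-- The 3×6 matrix function 𝒳(ζ) = J⁻¹ A_zz⁻¹ A_zy · ( −ζ·I₃ | 2^{1/2}(ζ²/2 − 1/24)·I₃ ). -/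
def Xmat (A : Matrix (Fin 6) (Fin 6) ℝ) (ζ : ℝ) : Matrix (Fin 3) (Fin 6) ℝ :=
  Jmat⁻¹ * (Azz A)⁻¹ * Azy A *
    hcat ((-ζ) • (1 : Matrix (Fin 3) (Fin 3) ℝ))
      ((Real.sqrt 2 * (ζ ^ 2 / 2 - 1 / 24)) • (1 : Matrix (Fin 3) (Fin 3) ℝ))

/-- Entrywise derivative 𝒳′(ζ). -/
def Xd (A : Matrix (Fin 6) (Fin 6) ℝ) (ζ : ℝ) : Matrix (Fin 3) (Fin 6) ℝ :=
  Matrix.of fun i j => deriv (fun t => Xmat A t i j) ζ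

/-- Entrywise second derivative 𝒳″(ζ). -/
def Xdd (A : Matrix (Fin 6) (Fin 6) ℝ) (ζ : ℝ) : Matrix (Fin 3) (Fin 6) ℝ :=
  Matrix.of fun i j => deriv (fun t => Xd A t i j) ζ


lemma mul_hcat (M : Matrix (Fin 3) (Fin 3) ℝ) (P Q : Matrix (Fin 3) (Fin 3) ℝ) :
    M * hcat P Q = hcat (M * P) (M * Q) := by
  ext i j
  by_cases h : (j : ℕ) < 3 <;>
    simp [hcat, Matrix.mul_apply, h]

lemma hcat_smul (a b : ℝ) (M : Matrix (Fin 3) (Fin 3) ℝ) :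
    hcat (a • M) (b • M) = M * hcat (a • (1 : Matrix (Fin 3) (Fin 3) ℝ)) (b • 1) := by
  rw [mul_hcat]
  simp [Matrix.mul_smul]

lemma isUnit_Jmat : IsUnit Jmat := by
  rw [Matrix.isUnit_iff_isUnit_det]
  have h2 : Real.sqrt 2 ≠ 0 := by positivity
  simp [Jmat, Matrix.det_diagonal, Fin.prod_univ_three, h2]

lemma d1 (c ζ : ℝ) : HasDerivAt (fun t : ℝ => -t * c) (-c) ζ := by
  have := ((hasDerivAt_id ζ).neg.mul_const c)
  simpa using this

lemma d2 (c ζ : ℝ) :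
    HasDerivAt (fun t : ℝ => Real.sqrt 2 * (t ^ 2 / 2 - 1 / 24) * c)
      (Real.sqrt 2 * ζ * c) ζ := by
  have h := ((((hasDerivAt_pow 2 ζ).div_const 2).sub_const (1/24)).const_mul
      (Real.sqrt 2)).mul_const c
  exact h.congr_deriv (by norm_num)

lemma d3 (c ζ : ℝ) : HasDerivAt (fun t : ℝ => Real.sqrt 2 * t * c) (Real.sqrt 2 * c) ζ := by
  have := ((hasDerivAt_id ζ).const_mul (Real.sqrt 2)).mul_const c
  simpa using this

lemma Xmat_apply (A : Matrix (Fin 6) (Fin 6) ℝ) (ζ : ℝ) (i : Fin 3) (j : Fin 6) :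
    Xmat A ζ i j =
      if h : (j : ℕ) < 3 then
        -ζ * (Jmat⁻¹ * (Azz A)⁻¹ * Azy A) i ⟨j, h⟩
      else
        Real.sqrt 2 * (ζ ^ 2 / 2 - 1 / 24) *
          (Jmat⁻¹ * (Azz A)⁻¹ * Azy A) i ⟨(j : ℕ) - 3, by omega⟩ := by
  rw [Xmat, mul_hcat]
  by_cases h : (j : ℕ) < 3 <;> simp [hcat, h, mul_comm]

lemma Xd_apply (A : Matrix (Fin 6) (Fin 6) ℝ) (ζ : ℝ) (i : Fin 3) (j : Fin 6) :
    Xd A ζ i j =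
      if h : (j : ℕ) < 3 then
        -(Jmat⁻¹ * (Azz A)⁻¹ * Azy A) i ⟨j, h⟩
      else
        Real.sqrt 2 * ζ * (Jmat⁻¹ * (Azz A)⁻¹ * Azy A) i ⟨(j : ℕ) - 3, by omega⟩ := by
  by_cases h : (j : ℕ) < 3
  · have : (fun t => Xmat A t i j) = fun t => -t * (Jmat⁻¹ * (Azz A)⁻¹ * Azy A) i ⟨j, h⟩ := by
      funext t; rw [Xmat_apply]; simp [h]
    simp only [Xd, Matrix.of_apply, this, (d1 _ ζ).deriv, h, dif_pos]
  · have : (fun t => Xmat A t i j) =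
        fun t => Real.sqrt 2 * (t ^ 2 / 2 - 1 / 24) *
          (Jmat⁻¹ * (Azz A)⁻¹ * Azy A) i ⟨(j : ℕ) - 3, by omega⟩ := by
      funext t; rw [Xmat_apply]; simp [h]
    simp only [Xd, Matrix.of_apply, this, (d2 _ ζ).deriv, h, dif_neg, not_false_iff]

lemma Xd_eq (A : Matrix (Fin 6) (Fin 6) ℝ) (ζ : ℝ) :
    Xd A ζ = Jmat⁻¹ * (Azz A)⁻¹ * Azy A *
      hcat ((-1 : ℝ) • (1 : Matrix (Fin 3) (Fin 3) ℝ)) ((Real.sqrt 2 * ζ) • 1) := by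
  rw [← hcat_smul]
  ext i j
  rw [Xd_apply]
  by_cases h : (j : ℕ) < 3 <;> simp [hcat, h, mul_comm]

lemma Xdd_eq (A : Matrix (Fin 6) (Fin 6) ℝ) (ζ : ℝ) :
    Xdd A ζ = Jmat⁻¹ * (Azz A)⁻¹ * Azy A *
      hcat ((0 : ℝ) • (1 : Matrix (Fin 3) (Fin 3) ℝ)) ((Real.sqrt 2) • 1) := by
  rw [← hcat_smul]
  ext i j
  by_cases h : (j : ℕ) < 3
  · have : (fun t => Xd A t i j) = fun _ => -(Jmat⁻¹ * (Azz A)⁻¹ * Azy A) i ⟨j, h⟩ := by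
      funext t; rw [Xd_apply]; simp [h]
    simp [Xdd, this, hcat, h]
  · have : (fun t => Xd A t i j) =
        fun t => Real.sqrt 2 * t * (Jmat⁻¹ * (Azz A)⁻¹ * Azy A) i ⟨(j : ℕ) - 3, by omega⟩ := by
      funext t; rw [Xd_apply]; simp [h]
    simp [Xdd, this, (d3 _ ζ).deriv, hcat, h, mul_comm]

lemma key (A : Matrix (Fin 6) (Fin 6) ℝ) (hAzz : IsUnit (Azz A)) (a b : ℝ) :
    Azz A * Jmat * (Jmat⁻¹ * (Azz A)⁻¹ * Azy A *
      hcat (a • (1 : Matrix (Fin 3) (Fin 3) ℝ)) (b • 1)) =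
    Azy A * hcat (a • (1 : Matrix (Fin 3) (Fin 3) ℝ)) (b • 1) := by
  have hJ : Jmat * Jmat⁻¹ = 1 := Matrix.mul_nonsing_inv _ (by
    simpa [Matrix.isUnit_iff_isUnit_det] using isUnit_Jmat)
  have hA : Azz A * (Azz A)⁻¹ = 1 := Matrix.mul_nonsing_inv _ (by
    simpa [Matrix.isUnit_iff_isUnit_det] using hAzz)
  calc Azz A * Jmat * (Jmat⁻¹ * (Azz A)⁻¹ * Azy A * hcat (a • 1) (b • 1))
      = Azz A * (Jmat * Jmat⁻¹) * (Azz A)⁻¹ * Azy A * hcat (a • 1) (b • 1) := by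
        simp only [Matrix.mul_assoc]
    _ = Azy A * hcat (a • 1) (b • 1) := by
        rw [hJ, Matrix.mul_one, hA, Matrix.one_mul]

lemma neg_hcat (M N : Matrix (Fin 3) (Fin 3) ℝ) : -(hcat M N) = hcat (-M) (-N) := by
  ext i j; by_cases h : (j : ℕ) < 3 <;> simp [hcat, h]

theorem Xmat_solves_transverse_problem (A : Matrix (Fin 6) (Fin 6) ℝ)
    (hAzz : IsUnit (Azz A)) :
    (∀ ζ : ℝ,
      Azz A * Jmat * Xd A ζ =
        -(Azy A * hcat (1 : Matrix (Fin 3) (Fin 3) ℝ)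
            ((-(Real.sqrt 2) * ζ) • (1 : Matrix (Fin 3) (Fin 3) ℝ)))) ∧
    (∀ ζ ∈ Set.Ioo (-(1 : ℝ) / 2) (1 / 2),
      -(Azz A * Jmat * Xdd A ζ) =
        Azy A * hcat (0 : Matrix (Fin 3) (Fin 3) ℝ)
          ((-(Real.sqrt 2)) • (1 : Matrix (Fin 3) (Fin 3) ℝ))) ∧
    (Azz A * Jmat * Xd A (1 / 2) =
      -(Azy A * hcat (1 : Matrix (Fin 3) (Fin 3) ℝ)
          ((-(Real.sqrt 2)⁻¹) • (1 : Matrix (Fin 3) (Fin 3) ℝ)))) ∧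
    (-(Azz A * Jmat * Xd A (-(1 / 2))) =
      Azy A * hcat (1 : Matrix (Fin 3) (Fin 3) ℝ)
        (((Real.sqrt 2)⁻¹) • (1 : Matrix (Fin 3) (Fin 3) ℝ))) := by
  have main : ∀ ζ : ℝ,
      Azz A * Jmat * Xd A ζ =
        -(Azy A * hcat (1 : Matrix (Fin 3) (Fin 3) ℝ)
            ((-(Real.sqrt 2) * ζ) • (1 : Matrix (Fin 3) (Fin 3) ℝ))) := by
    intro ζ
    rw [Xd_eq, key A hAzz, ← Matrix.mul_neg, neg_hcat]
    have e1 : (-1 : ℝ) • (1 : Matrix (Fin 3) (Fin 3) ℝ) = -(1) := by simp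
    have e2 : (Real.sqrt 2 * ζ) • (1 : Matrix (Fin 3) (Fin 3) ℝ) =
        -((-(Real.sqrt 2) * ζ) • (1 : Matrix (Fin 3) (Fin 3) ℝ)) := by
      rw [← neg_smul]; ring_nf
    rw [e1, e2]
  have hs : -(Real.sqrt 2) * (1 / 2 : ℝ) = -(Real.sqrt 2)⁻¹ := by
    have h2 : Real.sqrt 2 ≠ 0 := by positivity
    have hm : Real.sqrt 2 * Real.sqrt 2 = 2 := Real.mul_self_sqrt (by norm_num)
    field_simp
    linarith
  refine ⟨main, ?_, ?_, ?_⟩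
  · intro ζ _
    rw [Xdd_eq, key A hAzz, ← Matrix.mul_neg, neg_hcat]
    have e1 : -((0 : ℝ) • (1 : Matrix (Fin 3) (Fin 3) ℝ)) = 0 := by simp
    have e2 : -((Real.sqrt 2 : ℝ) • (1 : Matrix (Fin 3) (Fin 3) ℝ)) =
        (-(Real.sqrt 2)) • (1 : Matrix (Fin 3) (Fin 3) ℝ) := by rw [← neg_smul]
    rw [e2, ← e1]
  · have := main (1 / 2)
    rwa [hs] at this
  · have := main (-(1 / 2))
    have hs' : -(Real.sqrt 2) * (-(1 / 2) : ℝ) = (Real.sqrt 2)⁻¹ := by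
      have : -(Real.sqrt 2) * (-(1 / 2) : ℝ) = -(-(Real.sqrt 2) * (1 / 2 : ℝ)) := by ring
      rw [this, hs, neg_neg]
    rw [hs'] at this
    rw [this, neg_neg]
end
end

section
/- There exists a constant c > 0 such that for every h ∈ (0, 1/2], ∫_h^1 r (1 + |ln r|)² · ( (r² + h²) (1 + |ln(r + h)|)² )⁻¹ dr ≤ c (1 + |ln h|). (Radial form of the weighted-norm estimate used in the proof of Theorem 4.52 to bound |||G^{♯θ} a; Ω_h|||.) -/
/- STATEMENT 10: There is c > 0 such that for every h ∈ (0, 1/2],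
∫_h^1 r (1 + |ln r|)² / ( (r² + h²) (1 + |ln(r + h)|)² ) dr ≤ c (1 + |ln h|). -/

open MeasureTheory intervalIntegral Real

theorem radial_weighted_log_estimate :
    ∃ c : ℝ, 0 < c ∧ ∀ h ∈ Set.Ioc (0 : ℝ) (1 / 2),
      (∫ r in h..1,
          r * (1 + |Real.log r|) ^ 2 /
            ((r ^ 2 + h ^ 2) * (1 + |Real.log (r + h)|) ^ 2)) ≤
        c * (1 + |Real.log h|) := by
  refine ⟨4, by norm_num, fun h hh => ?_⟩
  obtain ⟨hpos, hle⟩ := hh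
  have h1 : h ≤ 1 := hle.trans (by norm_num)
  have huIcc : Set.uIcc h 1 = Set.Icc h 1 := Set.uIcc_of_le h1
  -- pointwise bound
  have key : ∀ r ∈ Set.Icc h 1,
      r * (1 + |Real.log r|) ^ 2 /
        ((r ^ 2 + h ^ 2) * (1 + |Real.log (r + h)|) ^ 2) ≤ 4 / r := by
    intro r hr
    obtain ⟨hrl, hru⟩ := hr
    have hrpos : 0 < r := lt_of_lt_of_le hpos hrl
    have hrhpos : 0 < r + h := by linarith
    have hAB : 1 + |Real.log r| ≤ 2 * (1 + |Real.log (r + h)|) := by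
      have hdiff : Real.log (r + h) - Real.log r = Real.log ((r + h) / r) := by
        rw [Real.log_div (by positivity) (ne_of_gt hrpos)]
      have h1' : (1 : ℝ) ≤ (r + h) / r := by
        rw [le_div_iff₀ hrpos]; linarith
      have h2' : (r + h) / r ≤ 2 := by
        rw [div_le_iff₀ hrpos]; linarith
      have hlog1 : 0 ≤ Real.log ((r + h) / r) := Real.log_nonneg h1'
      have hlog2 : Real.log ((r + h) / r) ≤ Real.log 2 := Real.log_le_log (by positivity) h2'
      have hlog2' : Real.log 2 < 0.6931471808 := Real.log_two_lt_d9
      have : |Real.log r| ≤ |Real.log (r + h)| + 1 := by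
        have := abs_sub_abs_le_abs_sub (Real.log r) (Real.log (r + h))
        have habs : |Real.log r - Real.log (r + h)| ≤ 1 := by
          rw [abs_sub_comm, hdiff, abs_of_nonneg hlog1]; linarith
        linarith
      have hB : 0 ≤ |Real.log (r + h)| := abs_nonneg _
      linarith
    have hA0 : 0 ≤ 1 + |Real.log r| := by positivity
    have hB0 : 0 < 1 + |Real.log (r + h)| := by positivity
    rw [div_le_div_iff₀ (by positivity) hrpos]
    have hsq : (1 + |Real.log r|) ^ 2 ≤ 4 * (1 + |Real.log (r + h)|) ^ 2 := by
      have h2 := pow_le_pow_left₀ hA0 hAB 2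
      calc (1 + |Real.log r|) ^ 2 ≤ (2 * (1 + |Real.log (r + h)|)) ^ 2 := h2
        _ = 4 * (1 + |Real.log (r + h)|) ^ 2 := by ring
    have step1 : r ^ 2 * (1 + |Real.log r|) ^ 2 ≤
        r ^ 2 * (4 * (1 + |Real.log (r + h)|) ^ 2) :=
      mul_le_mul_of_nonneg_left hsq (sq_nonneg r)
    have step2 : r ^ 2 * (1 + |Real.log (r + h)|) ^ 2 ≤
        (r ^ 2 + h ^ 2) * (1 + |Real.log (r + h)|) ^ 2 :=
      mul_le_mul_of_nonneg_right (by nlinarith [sq_nonneg h]) (sq_nonneg _)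
    calc r * (1 + |Real.log r|) ^ 2 * r = r ^ 2 * (1 + |Real.log r|) ^ 2 := by ring
      _ ≤ r ^ 2 * (4 * (1 + |Real.log (r + h)|) ^ 2) := step1
      _ = 4 * (r ^ 2 * (1 + |Real.log (r + h)|) ^ 2) := by ring
      _ ≤ 4 * ((r ^ 2 + h ^ 2) * (1 + |Real.log (r + h)|) ^ 2) := by linarith
  -- integrability
  have hint1 : IntervalIntegrable (fun r =>
      r * (1 + |Real.log r|) ^ 2 /
        ((r ^ 2 + h ^ 2) * (1 + |Real.log (r + h)|) ^ 2)) volume h 1 := by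
    apply ContinuousOn.intervalIntegrable
    rw [huIcc]
    have hlog : ContinuousOn (fun r : ℝ => Real.log r) (Set.Icc h 1) :=
      Real.continuousOn_log.mono (fun x hx => by
        simp only [Set.mem_compl_iff, Set.mem_singleton_iff]
        exact ne_of_gt (lt_of_lt_of_le hpos hx.1))
    have hlog2 : ContinuousOn (fun r : ℝ => Real.log (r + h)) (Set.Icc h 1) := by
      apply Real.continuousOn_log.comp (by fun_prop)
      intro x hx
      simp only [Set.mem_compl_iff, Set.mem_singleton_iff]
      have : 0 < x + h := by have := hx.1; linarith
      exact ne_of_gt this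
    apply ContinuousOn.div
    · exact (continuousOn_id.mul ((continuousOn_const.add hlog.abs).pow 2))
    · exact ((by fun_prop : ContinuousOn (fun r : ℝ => r ^ 2 + h ^ 2) _).mul
        ((continuousOn_const.add hlog2.abs).pow 2))
    · intro x hx
      have hxpos : 0 < x := lt_of_lt_of_le hpos hx.1
      positivity
  have hint2 : IntervalIntegrable (fun r : ℝ => 4 / r) volume h 1 := by
    apply ContinuousOn.intervalIntegrable
    rw [huIcc]
    apply ContinuousOn.div continuousOn_const continuousOn_id
    intro x hx
    exact ne_of_gt (lt_of_lt_of_le hpos hx.1)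
  have hmono := intervalIntegral.integral_mono_on h1 hint1 hint2 key
  have hcomp : (∫ r in h..1, (4 : ℝ) / r) = 4 * Real.log (1 / h) := by
    have : ∀ r : ℝ, (4 : ℝ) / r = 4 * (1 / r) := fun r => by ring
    simp_rw [this]
    rw [intervalIntegral.integral_const_mul, integral_one_div]
    rw [huIcc]
    intro hx
    exact absurd hx.1 (not_le.mpr hpos)
  have hlogh : Real.log h ≤ 0 := Real.log_nonpos (le_of_lt hpos) h1
  have : Real.log (1 / h) = -Real.log h := by
    rw [one_div, Real.log_inv]
  rw [hcomp, this] at hmono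
  have : |Real.log h| = -Real.log h := abs_of_nonpos hlogh
  linarith [hmono]
end
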